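/- Let p be a prime and F ∈ Zp[[X]] with Weierstrass factorization F = u · p^μ · ∏_{i=1}^r F_i, where u is a unit, μ ≥ 0, and each F_i is a distinguished polynomial of degree d_i. If n ≥ 1 satisfies p^{n−1}(p−1) > d_i for all i, then ord_{ε_n} F(ε_n) = μ · p^{n−1}(p−1) + Σ_i d_i, where ε_n = ζ_{p^n} − 1 and ord_{ε_n} is normalized by ord_{ε_n}(ε_n) = 1. -/

import Mathlib

open PowerSeries

/-- The `p^n`-th "cyclotomic" polynomial in `1+X`: `Φ_n = ∑_{j<p} (1+X)^{j·p^{n-1}}`. -/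
noncomputable def PhiPS5 (p : ℕ) [Fact p.Prime] (n : ℕ) : PowerSeries ℤ_[p] :=
  ∑ j ∈ Finset.range p, (1 + PowerSeries.X) ^ (j * p ^ (n - 1))

section Aux

variable {p : ℕ} [hp : Fact p.Prime]

/-- Divide a power series all of whose coefficients are divisible by `p` by `p`. -/
private lemma pdivPS (A : PowerSeries ℤ_[p])
    (h : ∀ k, (PowerSeries.coeff (R := ℤ_[p]) k) A ∈ Ideal.span {(p : ℤ_[p])}) :
    ∃ B, A = (p : PowerSeries ℤ_[p]) * B := by
  choose c hc using fun k => Ideal.mem_span_singleton.mp (h k)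
  refine ⟨PowerSeries.mk c, ?_⟩
  ext k
  rw [show ((p : ℕ) : PowerSeries ℤ_[p]) = PowerSeries.C (R := ℤ_[p]) ((p : ℕ) : ℤ_[p]) from
    (map_natCast (PowerSeries.C (R := ℤ_[p])) p).symm, PowerSeries.coeff_C_mul, PowerSeries.coeff_mk]
  exact hc k

private lemma Phi_const (n : ℕ) :
    PowerSeries.constantCoeff (R := ℤ_[p]) (PhiPS5 p n) = p := by
  rw [PhiPS5, map_sum]
  simp

private lemma Phi_decomp (n : ℕ) (hn : 1 ≤ n) :
    ∃ G0 : PowerSeries ℤ_[p],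
      PhiPS5 p n = PowerSeries.X ^ (p ^ (n - 1) * (p - 1)) + (p : PowerSeries ℤ_[p]) * G0 ∧
      PowerSeries.constantCoeff (R := ℤ_[p]) G0 = 1 := by
  have hp2 := hp.out.two_le
  set q := p ^ (n - 1) with hqdef
  set e := q * (p - 1) with hedef
  have hq1 : 0 < q := pow_pos (by omega) _
  have he1 : 0 < e := Nat.mul_pos hq1 (by omega)
  have heq : e + q = q * p := by
    have h1 : p - 1 + 1 = p := by omega
    calc e + q = q * (p - 1) + q * 1 := by rw [hedef, mul_one]
    _ = q * (p - 1 + 1) := by ring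
    _ = q * p := by rw [h1]
  haveI : CharP ((ZMod p)⟦X⟧) p := charP_of_injective_ringHom PowerSeries.C_injective p
  have hmap : PowerSeries.map (PadicInt.toZMod (p := p)) (PhiPS5 p n) = PowerSeries.X ^ e := by
    have hfrob : ((1 : (ZMod p)⟦X⟧) + PowerSeries.X) ^ q = 1 + PowerSeries.X ^ q := by
      simpa using add_pow_char_pow (R := (ZMod p)⟦X⟧) (1 : (ZMod p)⟦X⟧) (PowerSeries.X)
        (p := p) (n := n - 1)
    have hΦ : PowerSeries.map (PadicInt.toZMod (p := p)) (PhiPS5 p n)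
        = ∑ j ∈ Finset.range p, ((1 : (ZMod p)⟦X⟧) + PowerSeries.X ^ q) ^ j := by
      rw [PhiPS5, map_sum]
      refine Finset.sum_congr rfl fun j _ => ?_
      rw [map_pow, map_add, map_one, PowerSeries.map_X, pow_mul', hfrob]
    have hXq : (PowerSeries.X : (ZMod p)⟦X⟧) ^ q ≠ 0 := pow_ne_zero _ PowerSeries.X_ne_zero
    have hgeom : (∑ j ∈ Finset.range p, ((1 : (ZMod p)⟦X⟧) + PowerSeries.X ^ q) ^ j)
        * PowerSeries.X ^ q = PowerSeries.X ^ e * PowerSeries.X ^ q := by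
      have hg := geom_sum_mul ((1 : (ZMod p)⟦X⟧) + PowerSeries.X ^ q) p
      rw [add_sub_cancel_left] at hg
      rw [hg, add_pow_char, one_pow, add_sub_cancel_left, ← pow_mul, ← pow_add, heq, mul_comm]
    rw [hΦ, mul_right_cancel₀ hXq hgeom]
  have hcoe : ∀ k, (PowerSeries.coeff (R := ℤ_[p]) k) (PhiPS5 p n - PowerSeries.X ^ e)
      ∈ Ideal.span {(p : ℤ_[p])} := by
    intro k
    rw [← PadicInt.maximalIdeal_eq_span_p, ← PadicInt.ker_toZMod, RingHom.mem_ker]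
    rw [← PowerSeries.coeff_map, map_sub, hmap, map_pow, PowerSeries.map_X, sub_self, map_zero]
  obtain ⟨G0, hG0⟩ := pdivPS _ hcoe
  have hΦeq : PhiPS5 p n = PowerSeries.X ^ e + (p : PowerSeries ℤ_[p]) * G0 := by
    rw [← hG0]; ring
  refine ⟨G0, hΦeq, ?_⟩
  have hc := congrArg (PowerSeries.constantCoeff (R := ℤ_[p])) hΦeq
  rw [Phi_const, map_add, map_mul, map_pow, PowerSeries.constantCoeff_X,
    zero_pow he1.ne', zero_add, map_natCast] at hc
  have hpne : ((p : ℕ) : ℤ_[p]) ≠ 0 := Nat.cast_ne_zero.mpr hp.out.ne_zero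
  have : ((p : ℕ) : ℤ_[p]) * 1 = ((p : ℕ) : ℤ_[p]) * PowerSeries.constantCoeff (R := ℤ_[p]) G0 := by
    rw [mul_one, ← hc]
  exact (mul_left_cancel₀ hpne this).symm

end Aux

set_option maxHeartbeats 1000000 in
/-- If `F = u · p^μ · ∏ F_i ∈ Zp[[X]]` with `u` a unit and the `F_i`
distinguished polynomials of degree `d_i`, and if `p^{n-1}(p-1) > d_i` for all `i`, then
`ord_{ε_n} F(ε_n) = μ·p^{n-1}(p-1) + ∑ d_i`; the valuation statement is expressed in the
discrete valuation ring `Λ/(Φ_n) ≅ Zp[ζ_{p^n}]`, where the image of `X` is the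
uniformizer `ε_n = ζ_{p^n} - 1` (so `ord_{ε_n}(ε_n) = 1`). -/
theorem stmt5 (p : ℕ) [hp : Fact p.Prime] (n : ℕ) (hn : 1 ≤ n)
    (r μ : ℕ) (u : (PowerSeries ℤ_[p])ˣ) (Fi : Fin r → Polynomial ℤ_[p]) (d : Fin r → ℕ)
    (hmonic : ∀ i, (Fi i).Monic) (hdeg : ∀ i, (Fi i).natDegree = d i)
    (hdist : ∀ i, ∀ j < d i, (Fi i).coeff j ∈ Ideal.span {(p : ℤ_[p])})
    (hsmall : ∀ i, d i < p ^ (n - 1) * (p - 1))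
    (F : PowerSeries ℤ_[p])
    (hF : F = (u : PowerSeries ℤ_[p]) * (p : PowerSeries ℤ_[p]) ^ μ *
        ∏ i, ((Fi i : Polynomial ℤ_[p]) : PowerSeries ℤ_[p])) :
    (Ideal.Quotient.mk (Ideal.span {PhiPS5 p n}) F ∈
        (Ideal.span {Ideal.Quotient.mk (Ideal.span {PhiPS5 p n}) PowerSeries.X}) ^
          (μ * (p ^ (n - 1) * (p - 1)) + ∑ i, d i)) ∧
    (Ideal.Quotient.mk (Ideal.span {PhiPS5 p n}) F ∉
        (Ideal.span {Ideal.Quotient.mk (Ideal.span {PhiPS5 p n}) PowerSeries.X}) ^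
          (μ * (p ^ (n - 1) * (p - 1)) + ∑ i, d i + 1)) := by
  classical
  have hp2 := hp.out.two_le
  set e := p ^ (n - 1) * (p - 1) with hedef
  have he1 : 0 < e := Nat.mul_pos (pow_pos (by omega) _) (by omega)
  obtain ⟨G0, hG0, hG00⟩ := Phi_decomp (p := p) n hn
  have hG0unit : IsUnit G0 :=
    PowerSeries.isUnit_iff_constantCoeff.mpr (by rw [hG00]; exact isUnit_one)
  set I := Ideal.span {PhiPS5 p n} with hI
  set π := Ideal.Quotient.mk I with hπ
  set x := π PowerSeries.X with hx
  set N := μ * e + ∑ i, d i with hN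
  -- decompose each Fi
  have hH : ∀ i, ∃ Hi, ((Fi i : Polynomial ℤ_[p]) : PowerSeries ℤ_[p])
      = PowerSeries.X ^ (d i) + (p : PowerSeries ℤ_[p]) * Hi := by
    intro i
    have h1 : ∀ k, (PowerSeries.coeff (R := ℤ_[p]) k)
        (((Fi i : Polynomial ℤ_[p]) : PowerSeries ℤ_[p]) - PowerSeries.X ^ (d i))
        ∈ Ideal.span {(p : ℤ_[p])} := by
      intro k
      rw [map_sub, Polynomial.coeff_coe, PowerSeries.coeff_X_pow]
      rcases lt_trichotomy k (d i) with h | h | h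
      · rw [if_neg h.ne, sub_zero]; exact hdist i k h
      · rw [if_pos h, h, show (Fi i).coeff (d i) = 1 from by
          rw [← hdeg i]; exact (hmonic i).coeff_natDegree, sub_self]
        exact zero_mem _
      · rw [if_neg h.ne', sub_zero,
          Polynomial.coeff_eq_zero_of_natDegree_lt (by rw [hdeg i]; exact h)]
        exact zero_mem _
    obtain ⟨B, hB⟩ := pdivPS _ h1
    exact ⟨B, by rw [← hB]; ring⟩
  choose H hHspec using hH
  -- basic relations in the quotient
  have hΦ0 : π (PhiPS5 p n) = 0 :=
    Ideal.Quotient.eq_zero_iff_mem.mpr (Ideal.subset_span rfl)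
  have hxe : ((p : ℕ) : PowerSeries ℤ_[p] ⧸ I) * π G0 = -(x ^ e) := by
    have h1 := congrArg π hG0
    rw [hΦ0, map_add, map_mul, map_pow, map_natCast, ← hx] at h1
    linear_combination -h1
  set g0i : PowerSeries ℤ_[p] := ((hG0unit.unit⁻¹ : (PowerSeries ℤ_[p])ˣ) : PowerSeries ℤ_[p])
    with hg0i
  have hg0mul : G0 * g0i = 1 := hG0unit.mul_val_inv
  have hpq : ((p : ℕ) : PowerSeries ℤ_[p] ⧸ I) = x ^ e * (-(π g0i)) := by
    have h1 : ((p : ℕ) : PowerSeries ℤ_[p] ⧸ I)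
        = (((p : ℕ) : PowerSeries ℤ_[p] ⧸ I) * π G0) * π g0i := by
      rw [mul_assoc, ← map_mul, hg0mul, map_one, mul_one]
    rw [h1, hxe]; ring
  -- each Fi maps to x^{d i} times a unit
  set V : Fin r → PowerSeries ℤ_[p] := fun i =>
    1 - PowerSeries.X ^ (e - d i) * g0i * H i with hV
  have hVunit : ∀ i, IsUnit (V i) := by
    intro i
    rw [PowerSeries.isUnit_iff_constantCoeff, hV]
    have : (e - d i) ≠ 0 := by have := hsmall i; omega
    simp [map_sub, map_mul, map_pow, PowerSeries.constantCoeff_X, zero_pow this]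
  have hFi : ∀ i, π ((Fi i : Polynomial ℤ_[p]) : PowerSeries ℤ_[p]) = x ^ (d i) * π (V i) := by
    intro i
    have hde : d i + (e - d i) = e := by have := hsmall i; omega
    have hxsplit : x ^ (d i) * x ^ (e - d i) = x ^ e := by rw [← pow_add, hde]
    rw [hHspec i, map_add, map_mul, map_pow, map_natCast, ← hx, hpq, hV, map_sub, map_one,
      map_mul, map_mul, map_pow, ← hx]
    ring_nf
    linear_combination (π (H i) * π g0i) * hxsplit
  -- the unit W
  set W : PowerSeries ℤ_[p] := (u : PowerSeries ℤ_[p]) * (-g0i) ^ μ * ∏ i, V i with hW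
  have hWunit : IsUnit W := by
    refine (u.isUnit.mul (((hG0unit.unit⁻¹.isUnit).neg).pow μ)).mul ?_
    rw [show (∏ i, V i) = (((∏ i, (hVunit i).unit : (PowerSeries ℤ_[p])ˣ))
        : PowerSeries ℤ_[p]) from ?_]
    · exact Units.isUnit _
    · rw [← Units.coeHom_apply, map_prod]
      exact (Finset.prod_congr rfl fun i _ => ((hVunit i).unit_spec).symm)
  have hπF : π F = x ^ N * π W := by
    rw [hF, map_mul, map_mul, map_pow, map_natCast, hpq, map_prod]
    rw [Finset.prod_congr rfl fun i _ => hFi i, Finset.prod_mul_distrib,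
      Finset.prod_pow_eq_pow_sum]
    rw [hW, map_mul, map_mul, map_pow, map_neg, map_prod, mul_pow, ← pow_mul, hN, pow_add,
      mul_comm e μ]
    ring
  constructor
  · rw [Ideal.span_singleton_pow, Ideal.mem_span_singleton]
    exact ⟨π W, hπF⟩
  · intro hmem
    rw [Ideal.span_singleton_pow, Ideal.mem_span_singleton] at hmem
    obtain ⟨t, ht⟩ := hmem
    obtain ⟨T, rfl⟩ := Ideal.Quotient.mk_surjective t
    have key : π (PowerSeries.X ^ N * W - PowerSeries.X ^ (N + 1) * T) = 0 := by
      have h2 : π (PowerSeries.X ^ N * W) = π F := by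
        rw [map_mul, map_pow, ← hx, ← hπF]
      have h3 : π (PowerSeries.X ^ (N + 1) * T) = π F := by
        rw [map_mul, map_pow, ← hx]; exact ht.symm
      rw [map_sub, h2, h3, sub_self]
    have hmemI : PowerSeries.X ^ N * W - PowerSeries.X ^ (N + 1) * T ∈ I :=
      Ideal.Quotient.eq_zero_iff_mem.mp key
    obtain ⟨G, hG⟩ := Ideal.mem_span_singleton.mp hmemI
    have hXdvd : (PowerSeries.X : PowerSeries ℤ_[p]) ^ N ∣ PhiPS5 p n * G := by
      rw [← hG]
      exact dvd_sub (dvd_mul_right _ _)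
        (dvd_mul_of_dvd_left (pow_dvd_pow _ (Nat.le_succ N)) T)
    have hXΦ : ¬ (PowerSeries.X : PowerSeries ℤ_[p]) ∣ PhiPS5 p n := by
      rw [PowerSeries.X_dvd_iff, Phi_const]
      exact_mod_cast Nat.cast_ne_zero.mpr hp.out.ne_zero
    obtain ⟨G', rfl⟩ :=
      (PowerSeries.X_prime (R := ℤ_[p])).pow_dvd_of_dvd_mul_left N hXΦ hXdvd
    have hXN : (PowerSeries.X : PowerSeries ℤ_[p]) ^ N ≠ 0 :=
      pow_ne_zero _ PowerSeries.X_ne_zero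
    have hcancel : W - PowerSeries.X * T = PhiPS5 p n * G' := by
      apply mul_left_cancel₀ hXN
      calc PowerSeries.X ^ N * (W - PowerSeries.X * T)
          = PowerSeries.X ^ N * W - PowerSeries.X ^ (N + 1) * T := by ring
        _ = PhiPS5 p n * (PowerSeries.X ^ N * G') := hG
        _ = PowerSeries.X ^ N * (PhiPS5 p n * G') := by ring
    have hcc := congrArg (PowerSeries.constantCoeff (R := ℤ_[p])) hcancel
    rw [map_sub, map_mul (PowerSeries.constantCoeff (R := ℤ_[p])) PowerSeries.X T,
      PowerSeries.constantCoeff_X, zero_mul, sub_zero,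
      map_mul (PowerSeries.constantCoeff (R := ℤ_[p])) (PhiPS5 p n) G', Phi_const] at hcc
    have hWc : IsUnit (PowerSeries.constantCoeff (R := ℤ_[p]) W) :=
      PowerSeries.isUnit_iff_constantCoeff.mp hWunit
    rw [hcc] at hWc
    have hpu : IsUnit ((p : ℕ) : ℤ_[p]) := isUnit_of_mul_isUnit_left hWc
    rw [PadicInt.isUnit_iff, PadicInt.norm_p] at hpu
    have : (p : ℝ) = 1 := by
      rw [← inv_inv (p : ℝ), hpu, inv_one]
    have : p = 1 := by exact_mod_cast this
    omega
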